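/- arXiv:1707.06530 — 2 statements merged into one kernel-verified Lean document; each statement's English description precedes it below -/
import Mathlib

section
/- For every m ∈ [0,1], the sum of the three pairwise 3-setting steering quantities of the MDCC state equals at most 3: 2·((1-m²)/(1+m²))² + 1 + 8m²/(1+m²)² ≤ 3, with equality for all m (in fact the sum is identically 3). -/
theorem stmt7 (m : ℝ) (hm : m ∈ Set.Icc (0 : ℝ) 1) :
    2 * ((1 - m ^ 2) / (1 + m ^ 2)) ^ 2
        + (1 + 8 * m ^ 2 / (1 + m ^ 2) ^ 2) ≤ 3
    ∧ 2 * ((1 - m ^ 2) / (1 + m ^ 2)) ^ 2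
        + (1 + 8 * m ^ 2 / (1 + m ^ 2) ^ 2) = 3 := by
  have h : (1 + m ^ 2) ≠ 0 := by positivity
  have heq : 2 * ((1 - m ^ 2) / (1 + m ^ 2)) ^ 2
        + (1 + 8 * m ^ 2 / (1 + m ^ 2) ^ 2) = 3 := by
    field_simp
    ring
  exact ⟨heq.le, heq⟩
end

section
/- Let λ₀,…,λ₄ be nonnegative reals with ∑λᵢ² = 1. At least two of the three conditions (i) 4λ₀²(λ₃² − λ₄²) > 0, (ii) 4λ₀²(λ₂² − λ₄²) > 0, (iii) (λ₂λ₃ − λ₁λ₄)² − (λ₀λ₄)² > 0 hold if and only if λ₀ ≠ 0 and [λ₄ < min{λ₂, λ₃}, or ((λ₂λ₃ − λ₁λ₄)² > (λ₀λ₄)² and λ₄ < max{λ₂, λ₃})]. -/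
theorem stmt12 (l0 l1 l2 l3 l4 : ℝ)
    (hnn : 0 ≤ l0 ∧ 0 ≤ l1 ∧ 0 ≤ l2 ∧ 0 ≤ l3 ∧ 0 ≤ l4)
    (hnorm : l0 ^ 2 + l1 ^ 2 + l2 ^ 2 + l3 ^ 2 + l4 ^ 2 = 1) :
    ((4 * l0 ^ 2 * (l3 ^ 2 - l4 ^ 2) > 0 ∧ 4 * l0 ^ 2 * (l2 ^ 2 - l4 ^ 2) > 0)
      ∨ (4 * l0 ^ 2 * (l3 ^ 2 - l4 ^ 2) > 0
          ∧ (l2 * l3 - l1 * l4) ^ 2 - (l0 * l4) ^ 2 > 0)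
      ∨ (4 * l0 ^ 2 * (l2 ^ 2 - l4 ^ 2) > 0
          ∧ (l2 * l3 - l1 * l4) ^ 2 - (l0 * l4) ^ 2 > 0))
    ↔ (l0 ≠ 0 ∧ (l4 < min l2 l3
        ∨ ((l2 * l3 - l1 * l4) ^ 2 > (l0 * l4) ^ 2 ∧ l4 < max l2 l3))) := by
  obtain ⟨h0, h1, h2, h3, h4⟩ := hnn
  have key : ∀ a : ℝ, 0 ≤ a → (4 * l0 ^ 2 * (a ^ 2 - l4 ^ 2) > 0 ↔ (l0 ≠ 0 ∧ l4 < a)) := by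
    intro a ha
    constructor
    · intro h
      constructor
      · rintro rfl; nlinarith
      · by_contra h'
        push_neg at h'
        nlinarith [sq_nonneg l0, mul_le_mul h' h' ha h4]
    · rintro ⟨hne, hlt⟩
      have hp : 0 < l0 ^ 2 := pow_pos (lt_of_le_of_ne h0 (Ne.symm hne)) 2
      nlinarith [hp, mul_self_lt_mul_self h4 hlt]
  rw [key l3 h3, key l2 h2]
  constructor
  · rintro (⟨⟨hne, ha⟩, ⟨_, hb⟩⟩ | ⟨⟨hne, ha⟩, hc⟩ | ⟨⟨hne, hb⟩, hc⟩)
    · exact ⟨hne, Or.inl (lt_min hb ha)⟩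
    · exact ⟨hne, Or.inr ⟨by linarith, lt_max_of_lt_right ha⟩⟩
    · exact ⟨hne, Or.inr ⟨by linarith, lt_max_of_lt_left hb⟩⟩
  · rintro ⟨hne, hmin | ⟨hc, hmax⟩⟩
    · exact Or.inl ⟨⟨hne, (lt_min_iff.mp hmin).2⟩, ⟨hne, (lt_min_iff.mp hmin).1⟩⟩
    · rcases lt_max_iff.mp hmax with h | h
      · exact Or.inr (Or.inr ⟨⟨hne, h⟩, by linarith⟩)
      · exact Or.inr (Or.inl ⟨⟨hne, h⟩, by linarith⟩)
end
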